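/- Theorem 1 (CDM): Let x_t = √(ᾱ_t) x₀ + √(1-ᾱ_t) ε_t with ε_t ~ N(0,I) independent of x₀, 0 < ᾱ_t < 1, and suppose x_{T+1} ~ N(0,I) (i.e., ᾱ_{T+1} = 0). Define F(x,t) = log q(T+1|x) - log q(t|x) where q(t|x) is the posterior probability of timestep t given the mixture sample x. Then E[ε_t | x_t = x] = √(1-ᾱ_t) · (∇_x F(x,t) + x) at every x where the relevant densities are positive, regardless of the choice of the prior π on timesteps (with π(t) > 0 for all t). -/

import Mathlib

open Real MeasureTheory

lemma aux_exp_bound {c r : ℝ} (hc : 0 < c) (hr : 0 ≤ r) :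
    Real.exp (-r ^ 2 / (2 * c)) * r ≤ Real.sqrt (2 * c) := by
  have h2c : (0:ℝ) < 2 * c := by linarith
  have hs : Real.sqrt (2 * c) ^ 2 = 2 * c := Real.sq_sqrt h2c.le
  have hspos : 0 < Real.sqrt (2 * c) := Real.sqrt_pos.mpr h2c
  rcases le_or_gt r (Real.sqrt (2 * c)) with h | h
  · have he : Real.exp (-r ^ 2 / (2 * c)) ≤ 1 := by
      apply Real.exp_le_one_iff.mpr
      apply div_nonpos_of_nonpos_of_nonneg <;> nlinarith
    calc Real.exp (-r ^ 2 / (2 * c)) * r ≤ 1 * r :=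
          mul_le_mul_of_nonneg_right he hr
      _ = r := one_mul r
      _ ≤ _ := h
  · have hr0 : r ≠ 0 := (hspos.trans h).ne'
    have hu : r / Real.sqrt (2 * c) ≤ r ^ 2 / (2 * c) := by
      rw [div_le_div_iff₀ hspos h2c]
      nlinarith [mul_nonneg (mul_nonneg hr hspos.le) (sub_nonneg.mpr h.le)]
    have he : Real.exp (-(r ^ 2 / (2 * c))) ≤ Real.sqrt (2 * c) / r := by
      rw [Real.exp_neg, inv_le_comm₀ (Real.exp_pos _) (by positivity), inv_div]
      calc r / Real.sqrt (2*c) ≤ r ^ 2 / (2 * c) := hu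
        _ ≤ Real.exp (r ^ 2 / (2 * c)) := by
            nlinarith [Real.add_one_le_exp (r ^ 2 / (2 * c))]
    calc Real.exp (-r ^ 2 / (2 * c)) * r ≤ (Real.sqrt (2*c) / r) * r := by
          rw [neg_div]
          exact mul_le_mul_of_nonneg_right he hr
      _ = Real.sqrt (2 * c) := div_mul_cancel₀ _ hr0

lemma aux_kernel_deriv {d : ℕ} (c C₁ a : ℝ) (w0 : ℝ) (x z : EuclideanSpace ℝ (Fin d)) :
    HasFDerivAt (fun y : EuclideanSpace ℝ (Fin d) =>
      C₁ * Real.exp (-‖y - a • x‖ ^ 2 / (2 * c)) * w0)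
      ((-(C₁ * Real.exp (-‖z - a • x‖ ^ 2 / (2 * c)) * w0 / c)) • innerSL ℝ (z - a • x)) z := by
  have hfun : (fun y : EuclideanSpace ℝ (Fin d) =>
      C₁ * Real.exp (-‖y - a • x‖ ^ 2 / (2 * c)) * w0)
      = fun y => C₁ * Real.exp ((2 * c)⁻¹ * -‖y - a • x‖ ^ 2) * w0 := by
    funext y; rw [div_eq_inv_mul]
  rw [hfun]
  have h1 : HasFDerivAt (fun y : EuclideanSpace ℝ (Fin d) => y - a • x)
      (ContinuousLinearMap.id ℝ _) z := (hasFDerivAt_id z).sub_const _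
  have h3 := (((h1.norm_sq.neg.const_mul ((2 * c)⁻¹)).exp.const_mul C₁).mul_const w0)
  refine h3.congr_fderiv ?_
  ext w
  simp [div_eq_inv_mul]
  ring

set_option maxHeartbeats 1000000
set_option synthInstance.maxHeartbeats 1000000
section main
variable {d T : ℕ}

-- E abbreviation
local notation "E" => EuclideanSpace ℝ (Fin d)

/-- differentiation under the integral sign for the Gaussian convolution -/
lemma aux_conv_deriv (c C₁ a : ℝ) (hc : 0 < c) (hC₁ : 0 < C₁)
    (p0 : E → ℝ) (hp0_nonneg : ∀ x, 0 ≤ p0 x) (hp0_int : Integrable p0)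
    (y : E) :
    HasFDerivAt (fun z : E => ∫ x : E, C₁ * Real.exp (-‖z - a • x‖ ^ 2 / (2 * c)) * p0 x)
      (∫ x : E, (-(C₁ * Real.exp (-‖y - a • x‖ ^ 2 / (2 * c)) * p0 x / c)) •
        innerSL ℝ (y - a • x)) y := by
  have hcont : ∀ z : E, Continuous fun x : E => C₁ * Real.exp (-‖z - a • x‖ ^ 2 / (2 * c)) := by
    intro z; fun_prop
  have hKmeas : ∀ z : E, AEStronglyMeasurable
      (fun x : E => C₁ * Real.exp (-‖z - a • x‖ ^ 2 / (2 * c)) * p0 x) volume :=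
    fun z => ((hcont z).aestronglyMeasurable).mul hp0_int.1
  have hKint : ∀ z : E, Integrable
      (fun x : E => C₁ * Real.exp (-‖z - a • x‖ ^ 2 / (2 * c)) * p0 x) := by
    intro z
    refine (hp0_int.const_mul C₁).mono' (hKmeas z) (Filter.Eventually.of_forall fun x => ?_)
    rw [Real.norm_eq_abs, abs_of_nonneg (mul_nonneg (by positivity) (hp0_nonneg x))]
    have he : Real.exp (-‖z - a • x‖ ^ 2 / (2 * c)) ≤ 1 :=
      Real.exp_le_one_iff.mpr (div_nonpos_of_nonpos_of_nonneg (neg_nonpos.mpr (by positivity)) (by positivity))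
    calc C₁ * Real.exp (-‖z - a • x‖ ^ 2 / (2 * c)) * p0 x
        ≤ C₁ * 1 * p0 x := by
          apply mul_le_mul_of_nonneg_right _ (hp0_nonneg x)
          exact mul_le_mul_of_nonneg_left he hC₁.le
      _ = C₁ * p0 x := by ring
  refine hasFDerivAt_integral_of_dominated_of_fderiv_le (s := Set.univ)
    (F' := fun (z : E) (x : E) => (-(C₁ * Real.exp (-‖z - a • x‖ ^ 2 / (2 * c)) * p0 x / c)) •
      innerSL ℝ (z - a • x)) (by norm_num)
    (Filter.Eventually.of_forall fun z => hKmeas z) (hKint y) ?_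
    (bound := fun x => C₁ / c * Real.sqrt (2 * c) * p0 x) ?_ ?_ ?_
  · -- measurability of F' y
    have hg : AEStronglyMeasurable (fun x : E =>
        (-(C₁ * Real.exp (-‖y - a • x‖ ^ 2 / (2 * c)) * p0 x / c)) • (y - a • x)) volume := by
      apply AEStronglyMeasurable.fun_smul
      · exact (((hKmeas y).mul_const c⁻¹).neg).congr
          (Filter.Eventually.of_forall fun x => by simp [div_eq_mul_inv])
      · exact (by fun_prop : Continuous fun x : E => y - a • x).aestronglyMeasurable
    exact ((innerSL ℝ).continuous.comp_aestronglyMeasurable hg).congr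
      (Filter.Eventually.of_forall fun x => by ext w; simp [real_inner_smul_left])
  · -- bound
    refine Filter.Eventually.of_forall fun x => fun z _ => ?_
    beta_reduce
    rw [norm_smul (-(C₁ * Real.exp (-‖z - a • x‖ ^ 2 / (2 * c)) * p0 x / c)) (innerSL ℝ (z - a • x)), innerSL_apply_norm, Real.norm_eq_abs, abs_neg,
      abs_of_nonneg (div_nonneg (mul_nonneg (by positivity) (hp0_nonneg x)) hc.le)]
    have h1 := aux_exp_bound hc (norm_nonneg (z - a • x))
    calc C₁ * Real.exp (-‖z - a • x‖ ^ 2 / (2 * c)) * p0 x / c * ‖z - a • x‖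
        = C₁ / c * p0 x * (Real.exp (-‖z - a • x‖ ^ 2 / (2 * c)) * ‖z - a • x‖) := by ring
      _ ≤ C₁ / c * p0 x * Real.sqrt (2 * c) := by
          exact mul_le_mul_of_nonneg_left h1 (mul_nonneg (by positivity) (hp0_nonneg x))
      _ = C₁ / c * Real.sqrt (2 * c) * p0 x := by ring
  · exact (hp0_int.const_mul _)
  · exact Filter.Eventually.of_forall fun x z _ => aux_kernel_deriv c C₁ a (p0 x) x z

end main

/-- Theorem 1 (CDM): Let `x_t = √ᾱ_t x₀ + √(1-ᾱ_t) ε_t` with `ε_t ~ N(0,I)`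
independent of `x₀` and `0 < ᾱ_t < 1`, and suppose `x_{T+1} ~ N(0,I)`
(`ᾱ_{T+1} = 0`).  With `F(x) = log q(T+1|x) - log q(t|x)`, where `q(s|x)` is the
posterior probability of timestep `s` given the mixture sample `x`, the MMSE
denoiser satisfies `E[ε_t | x_t = x] = √(1-ᾱ_t) • (∇_x F(x) + x)` at every `x`
where the relevant densities are positive, regardless of the prior `π` on
timesteps (with `π s > 0` for all `s`). -/
theorem cdm_denoiser_from_classifier (d T : ℕ) (hd : 0 < d)
    (ᾱ : Fin (T + 2) → ℝ) (hᾱ0 : ᾱ 0 = 1) (hᾱT1 : ᾱ (Fin.last (T + 1)) = 0)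
    -- density of the clean data x₀
    (p0 : EuclideanSpace ℝ (Fin d) → ℝ)
    (hp0_nonneg : ∀ x, 0 ≤ p0 x) (hp0_int : Integrable p0)
    (hp0_one : ∫ x, p0 x = 1)
    -- densities of the noisy variables x_s at each timestep s
    (p : Fin (T + 2) → EuclideanSpace ℝ (Fin d) → ℝ)
    (hp0' : p 0 = p0)
    (hp : ∀ s : Fin (T + 2), s ≠ 0 → s ≠ Fin.last (T + 1) → ∀ y,
      p s y = ∫ x, (2 * π * (1 - ᾱ s)) ^ (-(d : ℝ) / 2) *
        Real.exp (-‖y - Real.sqrt (ᾱ s) • x‖ ^ 2 / (2 * (1 - ᾱ s))) * p0 x)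
    (hpT1 : ∀ y, p (Fin.last (T + 1)) y =
      (2 * π) ^ (-(d : ℝ) / 2) * Real.exp (-‖y‖ ^ 2 / 2))
    -- prior on timesteps, mixture and posterior
    (π_ : Fin (T + 2) → ℝ) (hπ_pos : ∀ s, 0 < π_ s) (hπ_sum : ∑ s, π_ s = 1)
    (ptilde : EuclideanSpace ℝ (Fin d) → ℝ)
    (hptilde : ∀ x, ptilde x = ∑ s, p s x * π_ s)
    (q : Fin (T + 2) → EuclideanSpace ℝ (Fin d) → ℝ)
    (hq : ∀ s x, q s x = p s x * π_ s / ptilde x)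
    -- the fixed timestep t with 0 < ᾱ_t < 1
    (t : Fin (T + 2)) (ht0 : t ≠ 0) (htT1 : t ≠ Fin.last (T + 1))
    (hᾱt : 0 < ᾱ t ∧ ᾱ t < 1)
    -- the MMSE denoiser E[ε_t | x_t = y]
    (Eps : EuclideanSpace ℝ (Fin d) → EuclideanSpace ℝ (Fin d))
    (hEps : ∀ y, Eps y = (p t y)⁻¹ • ∫ x,
      (((2 * π * (1 - ᾱ t)) ^ (-(d : ℝ) / 2) *
        Real.exp (-‖y - Real.sqrt (ᾱ t) • x‖ ^ 2 / (2 * (1 - ᾱ t)))) * p0 x) •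
        ((Real.sqrt (1 - ᾱ t))⁻¹ • (y - Real.sqrt (ᾱ t) • x)))
    (hEps_int : ∀ y, Integrable fun x : EuclideanSpace ℝ (Fin d) =>
      (((2 * π * (1 - ᾱ t)) ^ (-(d : ℝ) / 2) *
        Real.exp (-‖y - Real.sqrt (ᾱ t) • x‖ ^ 2 / (2 * (1 - ᾱ t)))) * p0 x) •
        ((Real.sqrt (1 - ᾱ t))⁻¹ • (y - Real.sqrt (ᾱ t) • x)))
    -- the classifier-based function F
    (F : EuclideanSpace ℝ (Fin d) → ℝ)
    (hF : ∀ x, F x = Real.log (q (Fin.last (T + 1)) x) - Real.log (q t x)) :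
    ∀ y : EuclideanSpace ℝ (Fin d),
      0 < p t y → 0 < ptilde y → DifferentiableAt ℝ ptilde y →
      Eps y = Real.sqrt (1 - ᾱ t) • (gradient F y + y) := by
  intro y hpty0 hptilde0 hdiffp
  have hc : (0:ℝ) < 1 - ᾱ t := by linarith [hᾱt.2]
  set c : ℝ := 1 - ᾱ t with hc_def
  set a : ℝ := Real.sqrt (ᾱ t) with ha_def
  set C₁ : ℝ := (2 * π * c) ^ (-(d : ℝ) / 2) with hC₁_def
  have hC₁ : 0 < C₁ := Real.rpow_pos_of_pos (by have := Real.pi_pos; positivity) _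
  set C₂ : ℝ := (2 * π) ^ (-(d : ℝ) / 2) with hC₂_def
  have hC₂ : 0 < C₂ := Real.rpow_pos_of_pos (by have := Real.pi_pos; positivity) _
  -- kernel abbreviation
  set K : EuclideanSpace ℝ (Fin d) → EuclideanSpace ℝ (Fin d) → ℝ :=
    fun z x => C₁ * Real.exp (-‖z - a • x‖ ^ 2 / (2 * c)) * p0 x with hK_def
  have hpt_eq : ∀ z, p t z = ∫ x, K z x := fun z => hp t ht0 htT1 z
  have hKnn : ∀ z x, 0 ≤ K z x := fun z x =>
    mul_nonneg (by positivity) (hp0_nonneg x)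
  have hKmeas : ∀ z, AEStronglyMeasurable (K z) volume := fun z =>
    ((by fun_prop : Continuous fun x : EuclideanSpace ℝ (Fin d) =>
      C₁ * Real.exp (-‖z - a • x‖ ^ 2 / (2 * c))).aestronglyMeasurable).mul hp0_int.1
  have hKint : ∀ z, Integrable (K z) := by
    intro z
    refine (hp0_int.const_mul C₁).mono' (hKmeas z) (Filter.Eventually.of_forall fun x => ?_)
    rw [Real.norm_eq_abs, abs_of_nonneg (hKnn z x)]
    have he : Real.exp (-‖z - a • x‖ ^ 2 / (2 * c)) ≤ 1 :=
      Real.exp_le_one_iff.mpr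
        (div_nonpos_of_nonpos_of_nonneg (neg_nonpos.mpr (by positivity)) (by positivity))
    calc C₁ * Real.exp (-‖z - a • x‖ ^ 2 / (2 * c)) * p0 x ≤ C₁ * 1 * p0 x := by
          exact mul_le_mul_of_nonneg_right (mul_le_mul_of_nonneg_left he hC₁.le) (hp0_nonneg x)
      _ = C₁ * p0 x := by ring
  -- positivity of all the densities
  have hpt_pos : ∀ z, 0 < p t z := by
    intro z
    rw [hpt_eq z]
    refine lt_of_le_of_ne (integral_nonneg fun x => hKnn z x) fun h0 => ?_
    have hae : (K z) =ᵐ[volume] 0 :=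
      (integral_eq_zero_iff_of_nonneg (fun x => hKnn z x) (hKint z)).mp h0.symm
    have hp00 : p0 =ᵐ[volume] 0 := by
      refine hae.mono fun x hx => ?_
      have hpos : (0:ℝ) < C₁ * Real.exp (-‖z - a • x‖ ^ 2 / (2 * c)) := by positivity
      have hx' : C₁ * Real.exp (-‖z - a • x‖ ^ 2 / (2 * c)) * p0 x = 0 := hx
      simpa using (mul_eq_zero.mp hx').resolve_left hpos.ne'
    have : (1:ℝ) = 0 := by
      rw [← hp0_one, integral_congr_ae hp00]; simp
    norm_num at this
  have hplast_pos : ∀ z, 0 < p (Fin.last (T + 1)) z := by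
    intro z; rw [hpT1 z]
    have := Real.pi_pos
    positivity
  -- rewrite F in a neighborhood of y
  have hptilde_ev : ∀ᶠ z in nhds y, 0 < ptilde z :=
    hdiffp.continuousAt.eventually_mem (isOpen_Ioi.mem_nhds (by simpa using hptilde0))
  have hF_eq : F =ᶠ[nhds y] fun z =>
      (Real.log (p (Fin.last (T + 1)) z) - Real.log (p t z)) +
      (Real.log (π_ (Fin.last (T + 1))) - Real.log (π_ t)) := by
    refine hptilde_ev.mono fun z hz => ?_
    rw [hF, hq, hq,
      Real.log_div (mul_pos (hplast_pos z) (hπ_pos _)).ne' hz.ne',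
      Real.log_div (mul_pos (hpt_pos z) (hπ_pos t)).ne' hz.ne',
      Real.log_mul (hplast_pos z).ne' (hπ_pos _).ne',
      Real.log_mul (hpt_pos z).ne' (hπ_pos t).ne']
    ring
  -- derivative of p t
  have hconv := aux_conv_deriv c C₁ a hc hC₁ p0 hp0_nonneg hp0_int y
  have hpt_fd : HasFDerivAt (p t)
      (∫ x, (-(K y x / c)) • innerSL ℝ (y - a • x)) y := by
    have hand : (p t) = fun z => ∫ x, K z x := funext hpt_eq
    rw [hand]
    exact hconv
  -- the vector-valued integrals
  set I : EuclideanSpace ℝ (Fin d) :=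
    ∫ x, (K y x) • ((Real.sqrt c)⁻¹ • (y - a • x)) with hI_def
  have hI_int : Integrable (fun x : EuclideanSpace ℝ (Fin d) =>
      (K y x) • ((Real.sqrt c)⁻¹ • (y - a • x))) := hEps_int y
  have hsc : Real.sqrt c ≠ 0 := (Real.sqrt_pos.mpr hc).ne'
  have hscalar : ∀ r : ℝ, (-(Real.sqrt c)⁻¹) * (r * (Real.sqrt c)⁻¹) = -(r / c) := by
    intro r
    have hss : Real.sqrt c * Real.sqrt c = c := Real.mul_self_sqrt hc.le
    field_simp
    rw [Real.sq_sqrt hc.le]; ring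
  have hg_eq : (fun x : EuclideanSpace ℝ (Fin d) =>
      (-(Real.sqrt c)⁻¹) • ((K y x) • ((Real.sqrt c)⁻¹ • (y - a • x)))) =
      fun x => (-(K y x / c)) • (y - a • x) := by
    funext x
    rw [smul_smul, smul_smul]
    congr 1
    have hss : Real.sqrt c * Real.sqrt c = c := Real.mul_self_sqrt hc.le
    field_simp
    rw [Real.sq_sqrt hc.le]; ring
  have hg_int : Integrable (fun x : EuclideanSpace ℝ (Fin d) =>
      (-(K y x / c)) • (y - a • x)) := by
    rw [← hg_eq]; exact hI_int.smul (-(Real.sqrt c)⁻¹)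
  set G₁ : EuclideanSpace ℝ (Fin d) := ∫ x, (-(K y x / c)) • (y - a • x) with hG₁_def
  have hG₁I : G₁ = (-(Real.sqrt c)⁻¹) • I := by
    rw [hG₁_def, hI_def, ← integral_smul, hg_eq]
  -- identify the fderiv with innerSL G₁
  have hL : (∫ x, (-(K y x / c)) • innerSL ℝ (y - a • x)) = innerSL ℝ G₁ := by
    rw [hG₁_def, ← ContinuousLinearMap.integral_comp_comm (innerSL ℝ) hg_int]
    congr 1
    funext x
    ext w
    simp only [ContinuousLinearMap.smul_apply, innerSL_apply_apply, real_inner_smul_left,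
      smul_eq_mul]
    exact (real_inner_smul_left (y - a • x) w (-(K y x / c))).symm
  have htd : ∀ v : EuclideanSpace ℝ (Fin d),
      (InnerProductSpace.toDual ℝ (EuclideanSpace ℝ (Fin d))) v = innerSL ℝ v := by
    intro v; ext w; simp [InnerProductSpace.toDual_apply_apply]
  -- gradient of log p t
  have hlogpt : HasGradientAt (fun z => Real.log (p t z)) ((p t y)⁻¹ • G₁) y := by
    rw [hasGradientAt_iff_hasFDerivAt, htd, _root_.map_smul]
    rw [hL] at hpt_fd
    exact hpt_fd.log (hpt_pos y).ne'
  -- gradient of log p last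
  have hloglast : HasGradientAt (fun z => Real.log (p (Fin.last (T + 1)) z)) (-y) y := by
    have hfun : (fun z => Real.log (p (Fin.last (T + 1)) z)) =
        fun z : EuclideanSpace ℝ (Fin d) => Real.log C₂ + (2:ℝ)⁻¹ * -‖z‖ ^ 2 := by
      funext z
      rw [hpT1 z, Real.log_mul hC₂.ne' (Real.exp_ne_zero _), Real.log_exp, neg_div,
        div_eq_inv_mul, neg_mul_eq_mul_neg]
    rw [hasGradientAt_iff_hasFDerivAt, hfun]
    have h2 := (((hasFDerivAt_id y).norm_sq.neg.const_mul ((2:ℝ)⁻¹)).const_add (Real.log C₂))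
    refine h2.congr_fderiv ?_
    ext w
    simp [InnerProductSpace.toDual_apply_apply, real_inner_smul_left]
  -- gradient of F
  have hFgrad : gradient F y = -y - (p t y)⁻¹ • G₁ := by
    rw [hF_eq.gradient.self_of_nhds]
    refine HasGradientAt.gradient ?_
    rw [hasGradientAt_iff_hasFDerivAt]
    have h3 := ((hloglast.hasFDerivAt.sub hlogpt.hasFDerivAt).add_const
      (Real.log (π_ (Fin.last (T + 1))) - Real.log (π_ t)))
    rw [_root_.map_sub]
    exact h3
  -- final algebra
  rw [hEps y, ← hI_def, hFgrad]
  have hIG : I = (-(Real.sqrt c)) • G₁ := by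
    rw [hG₁I, smul_smul]
    rw [show (-(Real.sqrt c)) * (-(Real.sqrt c)⁻¹) = Real.sqrt c * (Real.sqrt c)⁻¹ by ring,
      mul_inv_cancel₀ hsc, one_smul]
  rw [hIG]
  module
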